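/- arXiv:1303.4982 — 3 statements merged into one kernel-verified Lean document; each statement's English description precedes it below -/
import Mathlib

section
/- (Variable version of the Lovász Local Lemma.) Let V be a finite index set and for each v ∈ V let (Ω_v, μ_v) be a probability space; equip Ω = ∏_{v∈V} Ω_v with the product probability measure P. Let 𝒜 be a finite set of events in Ω such that each A ∈ 𝒜 is measurable with respect to the coordinates in some finite set vbl(A) ⊆ V. If there exists an assignment x : 𝒜 → (0,1) such that for every A ∈ 𝒜, P(A) ≤ x(A) · ∏_{B ∈ 𝒜, B ≠ A, vbl(A) ∩ vbl(B) ≠ ∅} (1 − x(B)), then P(⋂_{A∈𝒜} Aᶜ) ≥ ∏_{A∈𝒜} (1 − x(A)) > 0; in particular, with positive probability none of the events in 𝒜 occurs. -/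
open MeasureTheory

open scoped Classical in
/-- Events measurable w.r.t. disjoint coordinate sets are independent under a product measure. -/
lemma lll_indep_aux {V : Type*} [Fintype V] {Ω : V → Type*} [∀ v, MeasurableSpace (Ω v)]
    (μ : ∀ v, Measure (Ω v)) [∀ v, IsProbabilityMeasure (μ v)]
    (s t : Finset V) (hd : Disjoint s t) {A C : Set (∀ v, Ω v)}
    (hA : MeasurableSet[MeasurableSpace.comap
      (fun (ω : ∀ v, Ω v) (v : (s : Finset V)) => ω v.1) inferInstance] A)
    (hC : MeasurableSet[MeasurableSpace.comap
      (fun (ω : ∀ v, Ω v) (v : (t : Finset V)) => ω v.1) inferInstance] C) :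
    Measure.pi μ (A ∩ C) = Measure.pi μ A * Measure.pi μ C := by
  obtain ⟨E, hE, rfl⟩ := MeasurableSpace.measurableSet_comap.mp hA
  obtain ⟨F, hF, rfl⟩ := MeasurableSpace.measurableSet_comap.mp hC
  let p : V → Prop := fun v => v ∈ s
  let e := MeasurableEquiv.piEquivPiSubtypeProd Ω p
  have hmp := measurePreserving_piEquivPiSubtypeProd μ p
  let g : (∀ v : {v // ¬ p v}, Ω v.1) → (∀ v : (t : Finset V), Ω v.1) :=
    fun ρ w => ρ ⟨w.1, fun hw => Finset.disjoint_left.mp hd hw w.2⟩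
  have hgm : Measurable g := measurable_pi_lambda _ (fun w => measurable_pi_apply _)
  have hAeq : (fun (ω : ∀ v, Ω v) (v : (s : Finset V)) => ω v.1) ⁻¹' E
      = e ⁻¹' (E ×ˢ Set.univ) := by
    ext ω; simp [e, MeasurableEquiv.piEquivPiSubtypeProd, Equiv.piEquivPiSubtypeProd, Set.mem_prod]; exact Iff.rfl
  have hCeq : (fun (ω : ∀ v, Ω v) (v : (t : Finset V)) => ω v.1) ⁻¹' F
      = e ⁻¹' (Set.univ ×ˢ (g ⁻¹' F)) := by
    ext ω; simp [e, g, MeasurableEquiv.piEquivPiSubtypeProd, Equiv.piEquivPiSubtypeProd, Set.mem_prod]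
  have hF' : MeasurableSet (g ⁻¹' F) := hgm hF
  rw [hAeq, hCeq, ← Set.preimage_inter, Set.prod_inter_prod, Set.inter_univ, Set.univ_inter]
  rw [hmp.measure_preimage (hE.prod hF').nullMeasurableSet,
    hmp.measure_preimage (hE.prod MeasurableSet.univ).nullMeasurableSet,
    hmp.measure_preimage (MeasurableSet.univ.prod hF').nullMeasurableSet]
  rw [Measure.prod_prod, Measure.prod_prod, Measure.prod_prod]
  simp [measure_univ, mul_comm, mul_assoc, mul_left_comm]

lemma lll_comap_mono {V : Type*} {Ω : V → Type*} [∀ v, MeasurableSpace (Ω v)]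
    (s t : Finset V) (h : s ⊆ t) {A : Set (∀ v, Ω v)}
    (hA : MeasurableSet[MeasurableSpace.comap
      (fun (ω : ∀ v, Ω v) (v : (s : Finset V)) => ω v.1) inferInstance] A) :
    MeasurableSet[MeasurableSpace.comap
      (fun (ω : ∀ v, Ω v) (v : (t : Finset V)) => ω v.1) inferInstance] A := by
  obtain ⟨E, hE, rfl⟩ := MeasurableSpace.measurableSet_comap.mp hA
  refine MeasurableSpace.measurableSet_comap.mpr
    ⟨(fun (ρ : ∀ v : (t : Finset V), Ω v.1) (v : (s : Finset V)) => ρ ⟨v.1, h v.2⟩) ⁻¹' E,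
      (measurable_pi_lambda _ (fun v => measurable_pi_apply _)) hE, rfl⟩

lemma lll_meas_ambient {V : Type*} {Ω : V → Type*} [∀ v, MeasurableSpace (Ω v)]
    (s : Finset V) {A : Set (∀ v, Ω v)}
    (hA : MeasurableSet[MeasurableSpace.comap
      (fun (ω : ∀ v, Ω v) (v : (s : Finset V)) => ω v.1) inferInstance] A) :
    MeasurableSet A := by
  obtain ⟨E, hE, rfl⟩ := MeasurableSpace.measurableSet_comap.mp hA
  exact (measurable_pi_lambda _ (fun v => measurable_pi_apply _)) hE

open scoped Classical in
/-- **variable version of the Lovász Local Lemma.** Let `V` be a finite index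
set, `(Ω_v, μ_v)` probability spaces, `P` the product measure on `Ω = ∏_v Ω_v`, and `𝒜` a
finite set of events such that each `A ∈ 𝒜` is measurable with respect to the coordinates in
the finite set `vbl A ⊆ V`. If `x : 𝒜 → (0,1)` satisfies
`P(A) ≤ x A * ∏_{B ∈ 𝒜, B ≠ A, vbl A ∩ vbl B ≠ ∅} (1 - x B)` for every `A ∈ 𝒜`, then
`P(⋂_{A ∈ 𝒜} Aᶜ) ≥ ∏_{A ∈ 𝒜} (1 - x A) > 0`. -/
theorem lovasz_local_lemma_variable_version
    {V : Type*} [Fintype V] {Ω : V → Type*}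
    [∀ v, MeasurableSpace (Ω v)] (μ : ∀ v, Measure (Ω v))
    [∀ v, IsProbabilityMeasure (μ v)]
    (𝒜 : Finset (Set (∀ v, Ω v)))
    (vbl : Set (∀ v, Ω v) → Finset V)
    (hmeas : ∀ A ∈ 𝒜, MeasurableSet[MeasurableSpace.comap
      (fun (ω : ∀ v, Ω v) (v : (vbl A : Finset V)) => ω v.1) inferInstance] A)
    (x : Set (∀ v, Ω v) → ℝ)
    (hx : ∀ A ∈ 𝒜, x A ∈ Set.Ioo (0 : ℝ) 1)
    (hcond : ∀ A ∈ 𝒜, (Measure.pi μ A).toReal ≤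
      x A * ∏ B ∈ 𝒜.filter (fun B => B ≠ A ∧ (vbl A ∩ vbl B).Nonempty), (1 - x B)) :
    (∏ A ∈ 𝒜, (1 - x A)) ≤ (Measure.pi μ (⋂ A ∈ 𝒜, Aᶜ)).toReal ∧
      0 < (Measure.pi μ (⋂ A ∈ 𝒜, Aᶜ)).toReal := by
  set P := Measure.pi μ with hP
  -- ambient measurability
  have hmA : ∀ A ∈ 𝒜, MeasurableSet A := fun A hA => lll_meas_ambient (vbl A) (hmeas A hA)
  -- split identity in ℝ
  have split : ∀ (X C : Set (∀ v, Ω v)), MeasurableSet C →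
      (P (X \ C)).toReal = (P X).toReal - (P (X ∩ C)).toReal := by
    intro X C hC
    have h := measure_inter_add_diff (μ := P) X hC
    have h2 := congrArg ENNReal.toReal h
    rw [ENNReal.toReal_add (measure_ne_top _ _) (measure_ne_top _ _)] at h2
    linarith
  have hInterEq : ∀ (S : Finset (Set (∀ v, Ω v))) (C : Set (∀ v, Ω v)),
      (⋂ B ∈ insert C S, Bᶜ) = (⋂ B ∈ S, Bᶜ) \ C := by
    intro S C
    rw [Finset.set_biInter_insert]
    ext ω; simp [Set.mem_diff, and_comm]
  have hxnn : ∀ A ∈ 𝒜, (0:ℝ) ≤ 1 - x A := fun A hA => by have := (hx A hA).2; linarith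
  -- main induction
  have key : ∀ n : ℕ, ∀ S ⊆ 𝒜, S.card ≤ n → ∀ A ∈ 𝒜,
      (P (A ∩ ⋂ B ∈ S, Bᶜ)).toReal ≤ x A * (P (⋂ B ∈ S, Bᶜ)).toReal := by
    intro n
    induction n with
    | zero =>
      intro S hS hcard A hA
      rw [Nat.le_zero, Finset.card_eq_zero] at hcard
      subst hcard
      simp only [Finset.notMem_empty, Set.iInter_of_empty, Set.iInter_univ, Set.inter_univ]
      calc (P A).toReal ≤ x A * ∏ B ∈ 𝒜.filter
            (fun B => B ≠ A ∧ (vbl A ∩ vbl B).Nonempty), (1 - x B) := hcond A hA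
        _ ≤ x A * 1 := by
            refine mul_le_mul_of_nonneg_left ?_ (hx A hA).1.le
            exact Finset.prod_le_one (fun B hB => hxnn B (Finset.mem_filter.mp hB).1)
              (fun B hB => by have := (hx B (Finset.mem_filter.mp hB).1).1; linarith)
        _ = x A * (P Set.univ).toReal := by simp
    | succ n ih =>
      -- conditional lower bound using ih
      have lower : ∀ T : Finset (Set (∀ v, Ω v)), ∀ S₂ ⊆ 𝒜, T ⊆ 𝒜 → Disjoint T S₂ →
          (T ∪ S₂).card ≤ n + 1 →
          (∏ B ∈ T, (1 - x B)) * (P (⋂ B ∈ S₂, Bᶜ)).toReal ≤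
            (P (⋂ B ∈ T ∪ S₂, Bᶜ)).toReal := by
        intro T
        induction T using Finset.induction_on with
        | empty => intro S₂ hS₂ _ _ _; simp
        | @insert C T' hC iht =>
          intro S₂ hS₂ hT𝒜 hdisj hcard
          have hC𝒜 : C ∈ 𝒜 := hT𝒜 (Finset.mem_insert_self _ _)
          have hT'𝒜 : T' ⊆ 𝒜 := fun b hb => hT𝒜 (Finset.mem_insert_of_mem hb)
          have hCS₂ : C ∉ S₂ := Finset.disjoint_left.mp hdisj (Finset.mem_insert_self _ _)
          have hCU : C ∉ T' ∪ S₂ := by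
            simp only [Finset.mem_union]; rintro (h | h); exacts [hC h, hCS₂ h]
          have hUeq : insert C T' ∪ S₂ = insert C (T' ∪ S₂) := by
            ext b; simp [Finset.mem_insert, Finset.mem_union, or_assoc]
          have hcard' : (T' ∪ S₂).card ≤ n := by
            have h := Finset.card_insert_of_notMem hCU
            rw [hUeq] at hcard
            omega
          have hkey := ih (T' ∪ S₂) (Finset.union_subset hT'𝒜 hS₂) hcard' C hC𝒜
          have hiht := iht S₂ hS₂ hT'𝒜 (Finset.disjoint_insert_left.mp hdisj).2
            (le_trans (Finset.card_le_card (by intro b hb; simp_all [Finset.mem_union])) hcard)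
          rw [hUeq, hInterEq, split _ C (hmA C hC𝒜)]
          have hcomm : (P ((⋂ B ∈ T' ∪ S₂, Bᶜ) ∩ C)).toReal
              = (P (C ∩ ⋂ B ∈ T' ∪ S₂, Bᶜ)).toReal := by rw [Set.inter_comm]
          rw [Finset.prod_insert hC]
          have h1 : (0:ℝ) ≤ ∏ B ∈ T', (1 - x B) :=
            Finset.prod_nonneg (fun B hB => hxnn B (hT'𝒜 hB))
          have h2 : (0:ℝ) ≤ (P (⋂ B ∈ S₂, Bᶜ)).toReal := ENNReal.toReal_nonneg
          nlinarith [hxnn C hC𝒜, hkey, hiht, (hx C hC𝒜).1]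
      -- now the main statement at n+1
      intro S hS hcard A hA
      by_cases hAS : A ∈ S
      · have hsub : A ∩ ⋂ B ∈ S, Bᶜ = ∅ := by
          apply Set.eq_empty_iff_forall_notMem.mpr
          intro ω ⟨hω1, hω2⟩
          exact (Set.mem_iInter₂.mp hω2 A hAS) hω1
        rw [hsub]
        simp only [measure_empty, ENNReal.toReal_zero]
        exact mul_nonneg (hx A hA).1.le ENNReal.toReal_nonneg
      · set S₁ := S.filter (fun B => (vbl A ∩ vbl B).Nonempty) with hS₁
        set S₂ := S.filter (fun B => ¬ (vbl A ∩ vbl B).Nonempty) with hS₂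
        have hS₁𝒜 : S₁ ⊆ 𝒜 := le_trans (Finset.filter_subset _ _) hS
        have hS₂𝒜 : S₂ ⊆ 𝒜 := le_trans (Finset.filter_subset _ _) hS
        have hunion : S₁ ∪ S₂ = S := Finset.filter_union_filter_not_eq _ S
        have hdisj : Disjoint S₁ S₂ := Finset.disjoint_filter_filter_not S S _
        -- independence
        let T : Finset V := S₂.biUnion vbl
        have hvdisj : Disjoint (vbl A) T := by
          rw [Finset.disjoint_biUnion_right]
          intro B hB
          have := (Finset.mem_filter.mp hB).2
          rw [Finset.not_nonempty_iff_eq_empty] at this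
          exact Finset.disjoint_left.mpr (fun a ha hb => by
            have : a ∈ vbl A ∩ vbl B := Finset.mem_inter.mpr ⟨ha, hb⟩
            simp_all)
        have hCm : MeasurableSet[MeasurableSpace.comap
            (fun (ω : ∀ v, Ω v) (v : (T : Finset V)) => ω v.1) inferInstance]
            (⋂ B ∈ S₂, Bᶜ) := by
          refine MeasurableSet.biInter S₂.countable_toSet (fun B hB => ?_)
          have hB𝒜 : B ∈ 𝒜 := hS₂𝒜 hB
          have : vbl B ⊆ T := Finset.subset_biUnion_of_mem vbl hB
          exact (lll_comap_mono (vbl B) T this (hmeas B hB𝒜)).compl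
        have hindep := lll_indep_aux μ (vbl A) T hvdisj (hmeas A hA) hCm
        -- chain
        have hsub2 : A ∩ (⋂ B ∈ S, Bᶜ) ⊆ A ∩ ⋂ B ∈ S₂, Bᶜ := by
          apply Set.inter_subset_inter_right
          intro ω hω
          exact Set.mem_iInter₂.mpr (fun B hB => Set.mem_iInter₂.mp hω B
            (Finset.mem_filter.mp hB).1)
        have step1 : (P (A ∩ ⋂ B ∈ S, Bᶜ)).toReal ≤ (P (A ∩ ⋂ B ∈ S₂, Bᶜ)).toReal :=
          ENNReal.toReal_mono (measure_ne_top _ _) (measure_mono hsub2)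
        have step2 : (P (A ∩ ⋂ B ∈ S₂, Bᶜ)).toReal
            = (P A).toReal * (P (⋂ B ∈ S₂, Bᶜ)).toReal := by
          rw [hindep, ENNReal.toReal_mul]
        -- product over S₁ vs product over neighborhood
        have hS₁sub : S₁ ⊆ 𝒜.filter (fun B => B ≠ A ∧ (vbl A ∩ vbl B).Nonempty) := by
          intro B hB
          have h1 := Finset.mem_filter.mp hB
          refine Finset.mem_filter.mpr ⟨hS h1.1, ?_, h1.2⟩
          rintro rfl; exact hAS h1.1
        have hprodmono : ∏ B ∈ 𝒜.filter (fun B => B ≠ A ∧ (vbl A ∩ vbl B).Nonempty),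
            (1 - x B) ≤ ∏ B ∈ S₁, (1 - x B) := by
          rw [← Finset.prod_sdiff hS₁sub]
          have h1 : ∏ B ∈ (𝒜.filter (fun B => B ≠ A ∧ (vbl A ∩ vbl B).Nonempty)) \ S₁,
              (1 - x B) ≤ 1 :=
            Finset.prod_le_one
              (fun B hB => hxnn B (Finset.mem_filter.mp (Finset.mem_sdiff.mp hB).1).1)
              (fun B hB => by
                have := (hx B (Finset.mem_filter.mp (Finset.mem_sdiff.mp hB).1).1).1; linarith)
          have h2 : (0:ℝ) ≤ ∏ B ∈ S₁, (1 - x B) :=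
            Finset.prod_nonneg (fun B hB => hxnn B (hS₁𝒜 hB))
          nlinarith
        have hlow := lower S₁ S₂ hS₂𝒜 hS₁𝒜 hdisj (by rw [hunion]; exact hcard)
        rw [hunion] at hlow
        have hPA := hcond A hA
        have hf2 : (0:ℝ) ≤ (P (⋂ B ∈ S₂, Bᶜ)).toReal := ENNReal.toReal_nonneg
        have hprod1 : (0:ℝ) ≤ ∏ B ∈ S₁, (1 - x B) :=
          Finset.prod_nonneg (fun B hB => hxnn B (hS₁𝒜 hB))
        calc (P (A ∩ ⋂ B ∈ S, Bᶜ)).toReal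
            ≤ (P A).toReal * (P (⋂ B ∈ S₂, Bᶜ)).toReal := by rw [← step2]; exact step1
          _ ≤ (x A * ∏ B ∈ S₁, (1 - x B)) * (P (⋂ B ∈ S₂, Bᶜ)).toReal := by
              refine mul_le_mul_of_nonneg_right (le_trans hPA ?_) hf2
              exact mul_le_mul_of_nonneg_left hprodmono (hx A hA).1.le
          _ = x A * ((∏ B ∈ S₁, (1 - x B)) * (P (⋂ B ∈ S₂, Bᶜ)).toReal) := by ring
          _ ≤ x A * (P (⋂ B ∈ S, Bᶜ)).toReal :=
              mul_le_mul_of_nonneg_left hlow (hx A hA).1.le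
  -- conclusion
  have final : ∀ T ⊆ 𝒜, (∏ B ∈ T, (1 - x B)) ≤ (P (⋂ B ∈ T, Bᶜ)).toReal := by
    intro T
    induction T using Finset.induction_on with
    | empty => intro _; simp
    | @insert C T' hC iht =>
      intro hT𝒜
      have hC𝒜 : C ∈ 𝒜 := hT𝒜 (Finset.mem_insert_self _ _)
      have hT'𝒜 : T' ⊆ 𝒜 := fun b hb => hT𝒜 (Finset.mem_insert_of_mem hb)
      have hkey := key 𝒜.card T' hT'𝒜 (Finset.card_le_card hT'𝒜) C hC𝒜
      rw [hInterEq, split _ C (hmA C hC𝒜), Finset.prod_insert hC]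
      have hcomm : (P ((⋂ B ∈ T', Bᶜ) ∩ C)).toReal
          = (P (C ∩ ⋂ B ∈ T', Bᶜ)).toReal := by rw [Set.inter_comm]
      have h1 : (0:ℝ) ≤ ∏ B ∈ T', (1 - x B) :=
        Finset.prod_nonneg (fun B hB => hxnn B (hT'𝒜 hB))
      nlinarith [hxnn C hC𝒜, iht hT'𝒜, (hx C hC𝒜).1]
  have hpos : (0:ℝ) < ∏ A ∈ 𝒜, (1 - x A) :=
    Finset.prod_pos (fun A hA => by have := (hx A hA).2; linarith)
  have hfin := final 𝒜 le_rfl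
  exact ⟨hfin, lt_of_lt_of_le hpos hfin⟩
end

section
/- Let G be a finite d-regular simple graph and let δ ≤ d be a positive integer. Consider the random spanning subgraph H of G obtained as follows: independently for each vertex v, choose uniformly at random a set of δ distinct edges incident to v, and let E(H) be the union of all chosen sets. Then for every cycle x₁, x₂, …, x_k, x₁ in G, the probability that all k edges (x₁,x₂), …, (x_{k−1},x_k), (x_k,x₁) belong to E(H) is at most (2δ/d)^k. -/
open SimpleGraph

/-- The space of configurations: for each vertex `v` a choice of a set of `δ` distinct
edges incident to `v`. -/
def edgeChoices {V : Type*} [Fintype V] [DecidableEq V]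
    (G : SimpleGraph V) [DecidableRel G.Adj] (δ : ℕ) : Type _ :=
  ∀ v : V, {s : Finset (Sym2 V) // s ⊆ G.incidenceFinset v ∧ s.card = δ}

section Aux

open Finset

lemma desc_aux (d δ : ℕ) (hδd : δ ≤ d) : ∀ t : ℕ,
    δ.descFactorial t * d ^ t ≤ δ ^ t * d.descFactorial t := by
  intro t
  induction t with
  | zero => simp
  | succ t ih =>
    rw [Nat.descFactorial_succ, Nat.descFactorial_succ, pow_succ, pow_succ]
    calc (δ - t) * Nat.descFactorial δ t * (d ^ t * d)
        = ((δ - t) * d) * (Nat.descFactorial δ t * d ^ t) := by ring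
      _ ≤ (δ * (d - t)) * (δ ^ t * Nat.descFactorial d t) := by
          apply Nat.mul_le_mul _ ih
          rw [Nat.sub_mul, Nat.mul_sub]
          exact Nat.sub_le_sub_left (by rw [Nat.mul_comm δ t]; exact Nat.mul_le_mul_left t hδd) _
      _ = δ ^ t * δ * ((d - t) * Nat.descFactorial d t) := by ring

lemma choose_aux (d δ t : ℕ) (htδ : t ≤ δ) (hδd : δ ≤ d) :
    (d - t).choose (δ - t) * d ^ t ≤ δ ^ t * d.choose δ := by
  have hkey := Nat.choose_mul (n := d) htδ
  have h1 : δ.choose t * d ^ t ≤ δ ^ t * d.choose t := by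
    have := desc_aux d δ hδd t
    rw [Nat.descFactorial_eq_factorial_mul_choose, Nat.descFactorial_eq_factorial_mul_choose] at this
    have ht : 0 < t.factorial := t.factorial_pos
    refine Nat.le_of_mul_le_mul_left ?_ ht
    calc t.factorial * (δ.choose t * d ^ t) = t.factorial * δ.choose t * d ^ t := by ring
      _ ≤ δ ^ t * (t.factorial * d.choose t) := by linarith [this]
      _ = t.factorial * (δ ^ t * d.choose t) := by ring
  have hct : 0 < d.choose t := Nat.choose_pos (htδ.trans hδd)
  refine Nat.le_of_mul_le_mul_right ?_ hct
  calc (d - t).choose (δ - t) * d ^ t * d.choose t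
      = (d.choose t * (d - t).choose (δ - t)) * d ^ t := by ring
    _ = (d.choose δ * δ.choose t) * d ^ t := by rw [← hkey]
    _ = d.choose δ * (δ.choose t * d ^ t) := by ring
    _ ≤ d.choose δ * (δ ^ t * d.choose t) := Nat.mul_le_mul_left _ h1
    _ = δ ^ t * d.choose δ * d.choose t := by ring

lemma superset_count {α : Type*} [DecidableEq α] (A T : Finset α) (δ : ℕ)
    (hTA : T ⊆ A) (ht : T.card ≤ δ) :
    ((A.powersetCard δ).filter (fun s => T ⊆ s)).card
      = (A.card - T.card).choose (δ - T.card) := by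
  rw [← card_sdiff_of_subset hTA, ← card_powersetCard]
  refine Finset.card_bij' (fun s _ => s \ T) (fun u _ => u ∪ T) ?_ ?_ ?_ ?_
  · intro s hs
    simp only [mem_filter, mem_powersetCard] at hs
    obtain ⟨⟨hsA, hsc⟩, hTs⟩ := hs
    rw [mem_powersetCard]
    exact ⟨sdiff_subset_sdiff hsA le_rfl, by rw [card_sdiff_of_subset hTs, hsc]⟩
  · intro u hu
    rw [mem_powersetCard] at hu
    obtain ⟨huA, huc⟩ := hu
    have hdisj : Disjoint u T := disjoint_of_subset_left huA sdiff_disjoint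
    simp only [mem_filter, mem_powersetCard]
    refine ⟨⟨union_subset (huA.trans sdiff_subset) hTA, ?_⟩, subset_union_right⟩
    rw [card_union_of_disjoint hdisj, huc, Nat.sub_add_cancel ht]
  · intro s hs
    simp only [mem_filter, mem_powersetCard] at hs
    exact sdiff_union_of_subset hs.2
  · intro u hu
    rw [mem_powersetCard] at hu
    have hdisj : Disjoint u T := disjoint_of_subset_left hu.1 sdiff_disjoint
    rw [union_sdiff_right, sdiff_eq_self_of_disjoint hdisj]

lemma superset_count_le {α : Type*} [DecidableEq α] (A T : Finset α) (d δ : ℕ)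
    (hTA : T ⊆ A) (hA : A.card = d) (hδd : δ ≤ d) :
    ((A.powersetCard δ).filter (fun s => T ⊆ s)).card * d ^ T.card
      ≤ δ ^ T.card * d.choose δ := by
  by_cases ht : T.card ≤ δ
  · rw [superset_count A T δ hTA ht, hA]
    exact choose_aux d δ T.card ht hδd
  · have : ((A.powersetCard δ).filter (fun s => T ⊆ s)) = ∅ := by
      rw [filter_eq_empty_iff]
      intro s hs hTs
      rw [mem_powersetCard] at hs
      exact ht (hs.2 ▸ card_le_card hTs)
    simp [this]

variable {V : Type*} [Fintype V] [DecidableEq V] (G : SimpleGraph V) [DecidableRel G.Adj]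

noncomputable instance edgeChoicesFintype (δ : ℕ) : Fintype (edgeChoices G δ) := by
  classical
  unfold edgeChoices
  infer_instance

lemma card_subtype_aux (δ : ℕ) (v : V) (P : Finset (Sym2 V) → Prop) [DecidablePred P] :
    Nat.card {s : Finset (Sym2 V) // (s ⊆ G.incidenceFinset v ∧ s.card = δ) ∧ P s}
      = (((G.incidenceFinset v).powersetCard δ).filter P).card := by
  classical
  rw [Nat.card_eq_fintype_card, Fintype.card_subtype]
  apply congrArg Finset.card
  ext s
  simp [Finset.mem_powersetCard, and_assoc]

lemma card_constrained (δ : ℕ) (T : V → Finset (Sym2 V)) :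
    Nat.card {c : edgeChoices G δ // ∀ v, T v ⊆ (c v : Finset (Sym2 V))}
      = ∏ v, (((G.incidenceFinset v).powersetCard δ).filter (fun s => T v ⊆ s)).card := by
  classical
  have e1 : {c : edgeChoices G δ // ∀ v, T v ⊆ (c v : Finset (Sym2 V))}
      ≃ ∀ v, {x : {s : Finset (Sym2 V) // s ⊆ G.incidenceFinset v ∧ s.card = δ} // T v ⊆ x.1} := by
    unfold edgeChoices
    exact Equiv.subtypePiEquivPi (p := fun v (x : {s : Finset (Sym2 V) // s ⊆ G.incidenceFinset v ∧ s.card = δ}) => T v ⊆ ↑x)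
  rw [Nat.card_congr e1, Nat.card_pi]
  refine Finset.prod_congr rfl fun v _ => ?_
  rw [Nat.card_congr (Equiv.subtypeSubtypeEquivSubtypeInter _ _), card_subtype_aux]

lemma card_total (δ : ℕ) :
    Nat.card (edgeChoices G δ) = ∏ v, ((G.incidenceFinset v).powersetCard δ).card := by
  classical
  rw [show edgeChoices G δ = ∀ v : V, {s : Finset (Sym2 V) // s ⊆ G.incidenceFinset v ∧ s.card = δ} from rfl,
    Nat.card_pi]
  refine Finset.prod_congr rfl fun v _ => ?_
  rw [Nat.card_eq_fintype_card, Fintype.card_subtype]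
  apply congrArg Finset.card
  ext s
  simp [Finset.mem_powersetCard]

end Aux

/-- Let `G` be a finite `d`-regular simple graph and `0 < δ ≤ d`. Choose,
independently and uniformly at random for each vertex `v`, a set of `δ` distinct edges
incident to `v`, and let `E(H)` be the union of the chosen sets. Then for every cycle of
length `k` in `G` the probability (w.r.t. the uniform measure on configurations) that all
`k` edges of the cycle belong to `E(H)` is at most `(2δ/d)^k`. -/
theorem random_subgraph_cycle_probability
    {V : Type*} [Fintype V] [DecidableEq V]
    (G : SimpleGraph V) [DecidableRel G.Adj] (d δ : ℕ)
    (hδpos : 0 < δ) (hδd : δ ≤ d) (hreg : G.IsRegularOfDegree d)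
    (x : V) (p : G.Walk x x) (hp : p.IsCycle) :
    ((Nat.card {c : edgeChoices G δ //
        ∀ e ∈ p.edges, ∃ v : V, e ∈ (c v : Finset (Sym2 V))}) : ℝ) /
      (Nat.card (edgeChoices G δ)) ≤ ((2 * δ : ℝ) / d) ^ p.length := by
  classical
  open Finset in
  have hdpos : 0 < d := hδpos.trans_le hδd
  have hel : p.edges.length = p.length := p.length_edges
  set E : Fin p.length → Sym2 V := fun i => p.edges[(i : ℕ)]'(by rw [hel]; exact i.isLt) with hE
  have hEmem : ∀ i, E i ∈ p.edges := fun i => List.getElem_mem _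
  have hEinj : Function.Injective E := by
    intro i j hij
    have hnd : p.edges.Nodup := hp.isCircuit.isTrail.edges_nodup
    have h2 := (List.nodup_iff_injective_getElem.1 hnd)
      (a₁ := ⟨(i : ℕ), by rw [hel]; exact i.isLt⟩) (a₂ := ⟨(j : ℕ), by rw [hel]; exact j.isLt⟩)
      (by simpa using hij)
    exact Fin.ext (by simpa using congrArg Fin.val h2)
  have hEedge : ∀ i, E i ∈ G.edgeSet := fun i => p.edges_subset_edgeSet (hEmem i)
  have hinc : ∀ (i : Fin p.length) (v : V), v ∈ E i → E i ∈ G.incidenceFinset v := by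
    intro i v hv
    rw [SimpleGraph.mem_incidenceFinset]
    exact ⟨hEedge i, hv⟩
  have hinc' : ∀ (i : Fin p.length) (v : V), E i ∈ G.incidenceFinset v → v ∈ E i := by
    intro i v h
    rw [SimpleGraph.mem_incidenceFinset] at h
    exact h.2
  have hdeg : ∀ v, (G.incidenceFinset v).card = d := fun v => by
    rw [G.card_incidenceFinset_eq_degree]; exact hreg v
  set N0 : ℕ := ∏ _v : V, d.choose δ with hN0
  have hNtot : Nat.card (edgeChoices G δ) = N0 := by
    rw [card_total, hN0]
    exact Finset.prod_congr rfl fun v _ => by rw [card_powersetCard, hdeg]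
  have hN0pos : 0 < N0 :=
    Finset.prod_pos fun v _ => Nat.choose_pos hδd
  set A : Finset (edgeChoices G δ) :=
    univ.filter (fun c => ∀ e ∈ p.edges, ∃ v : V, e ∈ (c v : Finset (Sym2 V))) with hA
  have hcardA : Nat.card {c : edgeChoices G δ //
      ∀ e ∈ p.edges, ∃ v : V, e ∈ (c v : Finset (Sym2 V))} = A.card := by
    rw [Nat.card_eq_fintype_card, Fintype.card_subtype]
  set F : Finset (Fin p.length → V) :=
    Fintype.piFinset (fun i => univ.filter (fun v => v ∈ E i)) with hF
  set B : (Fin p.length → V) → Finset (edgeChoices G δ) :=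
    fun f => univ.filter (fun c => ∀ i, E i ∈ (c (f i) : Finset (Sym2 V))) with hB
  have hsub : A ⊆ F.biUnion B := by
    intro c hc
    rw [hA, mem_filter] at hc
    choose g hg using fun i => hc.2 (E i) (hEmem i)
    rw [mem_biUnion]
    refine ⟨g, ?_, ?_⟩
    · rw [hF, Fintype.mem_piFinset]
      intro i
      rw [mem_filter]
      exact ⟨mem_univ _, hinc' i _ ((c (g i)).2.1 (hg i))⟩
    · rw [hB, mem_filter]
      exact ⟨mem_univ _, hg⟩
  have hBf : ∀ f ∈ F, (B f).card * d ^ p.length ≤ δ ^ p.length * N0 := by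
    intro f hf
    set T : V → Finset (Sym2 V) := fun v => (univ.filter (fun i => f i = v)).image E with hT
    have hfi : ∀ i, f i ∈ E i := by
      intro i
      have := (Fintype.mem_piFinset.1 hf) i
      rw [mem_filter] at this
      exact this.2
    have hTsub : ∀ v, T v ⊆ G.incidenceFinset v := by
      intro v e he
      rw [hT, mem_image] at he
      obtain ⟨i, hi, rfl⟩ := he
      rw [mem_filter] at hi
      apply hinc
      rw [← hi.2]
      exact hfi i
    have hiff : ∀ c : edgeChoices G δ,
        (∀ i, E i ∈ (c (f i) : Finset (Sym2 V))) ↔ (∀ v, T v ⊆ (c v : Finset (Sym2 V))) := by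
      intro c
      constructor
      · intro h v e he
        rw [hT, mem_image] at he
        obtain ⟨i, hi, rfl⟩ := he
        rw [mem_filter] at hi
        rw [← hi.2]
        exact h i
      · intro h i
        apply h (f i)
        rw [hT]
        exact mem_image_of_mem E (by rw [mem_filter]; exact ⟨mem_univ _, rfl⟩)
    have hcardBf : (B f).card
        = ∏ v, (((G.incidenceFinset v).powersetCard δ).filter (fun s => T v ⊆ s)).card := by
      have hcc := card_constrained G δ T
      rw [Nat.card_eq_fintype_card, Fintype.card_subtype] at hcc
      rw [← hcc, hB]
      apply congrArg Finset.card
      exact Finset.filter_congr (fun c _ => hiff c)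
    have hsum : ∑ v, (T v).card = p.length := by
      have h1 : ∀ v, (T v).card = (univ.filter (fun i => f i = v)).card := fun v => by
        rw [hT]; exact Finset.card_image_of_injective _ hEinj
      simp only [h1]
      have h2 := Finset.card_eq_sum_card_fiberwise
        (f := f) (s := (univ : Finset (Fin p.length))) (t := univ) (fun i _ => mem_univ _)
      simpa using h2.symm
    calc (B f).card * d ^ p.length
        = (∏ v, (((G.incidenceFinset v).powersetCard δ).filter (fun s => T v ⊆ s)).card)
            * ∏ v, d ^ (T v).card := by
          rw [hcardBf, Finset.prod_pow_eq_pow_sum, hsum]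
      _ = ∏ v, ((((G.incidenceFinset v).powersetCard δ).filter (fun s => T v ⊆ s)).card
            * d ^ (T v).card) := by rw [Finset.prod_mul_distrib]
      _ ≤ ∏ v, (δ ^ (T v).card * d.choose δ) := by
          refine Finset.prod_le_prod' fun v _ => ?_
          exact superset_count_le _ _ d δ (hTsub v) (hdeg v) hδd
      _ = (∏ v, δ ^ (T v).card) * ∏ _v : V, d.choose δ := by rw [Finset.prod_mul_distrib]
      _ = δ ^ p.length * N0 := by rw [Finset.prod_pow_eq_pow_sum, hsum, hN0]
  have hFcard : F.card ≤ 2 ^ p.length := by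
    rw [hF, Fintype.card_piFinset]
    calc ∏ i, (univ.filter (fun v => v ∈ E i)).card
        ≤ 2 ^ (univ : Finset (Fin p.length)).card := by
          refine Finset.prod_le_pow_card _ _ _ fun i _ => ?_
          obtain ⟨⟨a, b⟩, hab⟩ := Quot.exists_rep (E i)
          have hss : (univ.filter (fun v => v ∈ E i)) ⊆ {a, b} := by
            intro v hv
            rw [mem_filter, ← hab] at hv
            have : v = a ∨ v = b := Sym2.mem_iff.1 hv.2
            simpa [mem_insert, mem_singleton] using this
          calc (univ.filter (fun v => v ∈ E i)).card ≤ ({a, b} : Finset V).card :=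
                card_le_card hss
            _ ≤ 2 := by
                refine (card_insert_le _ _).trans ?_
                simp
      _ = 2 ^ p.length := by rw [card_univ, Fintype.card_fin]
  have hnat : A.card * d ^ p.length ≤ (2 * δ) ^ p.length * N0 := by
    calc A.card * d ^ p.length
        ≤ (F.biUnion B).card * d ^ p.length :=
          Nat.mul_le_mul_right _ (card_le_card hsub)
      _ ≤ (∑ f ∈ F, (B f).card) * d ^ p.length :=
          Nat.mul_le_mul_right _ (card_biUnion_le)
      _ = ∑ f ∈ F, (B f).card * d ^ p.length := by rw [Finset.sum_mul]
      _ ≤ ∑ _f ∈ F, δ ^ p.length * N0 := Finset.sum_le_sum hBf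
      _ = F.card * (δ ^ p.length * N0) := by rw [Finset.sum_const, smul_eq_mul]
      _ ≤ 2 ^ p.length * (δ ^ p.length * N0) :=
          Nat.mul_le_mul_right _ hFcard
      _ = (2 * δ) ^ p.length * N0 := by rw [mul_pow, mul_assoc]
  rw [hcardA, hNtot, div_pow, div_le_div_iff₀ (by exact_mod_cast hN0pos)
    (by positivity)]
  calc (A.card : ℝ) * (d : ℝ) ^ p.length = ((A.card * d ^ p.length : ℕ) : ℝ) := by push_cast; ring
    _ ≤ (((2 * δ) ^ p.length * N0 : ℕ) : ℝ) := by exact_mod_cast hnat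
    _ = (2 * δ : ℝ) ^ p.length * (N0 : ℝ) := by push_cast; ring
end

section
/- Let G be a countable, loopless, undirected graph with finite maximum degree and with minimum degree at least δ, where δ is a positive integer. Then G has a spanning subgraph G₁ with minimum degree at least δ such that no edge of G₁ joins two distinct vertices that both have degree greater than δ in G₁. -/
open SimpleGraph

private lemma zorn_min_aux {α : Type*} [PartialOrder α] (S : Set α) (x : α) (hx : x ∈ S)
    (ih : ∀ c ⊆ S, IsChain (· ≤ ·) c → ∀ y ∈ c, ∃ lb ∈ S, ∀ z ∈ c, lb ≤ z) :
    ∃ m, m ≤ x ∧ m ∈ S ∧ ∀ z ∈ S, z ≤ m → m ≤ z := by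
  obtain ⟨m, hm1, hm2⟩ := @zorn_le_nonempty₀ αᵒᵈ _ S
    (fun c hc hch y hy => ih c hc hch.symm y hy) x hx
  exact ⟨m, hm1, hm2.1, fun z hz hzm => hm2.2 hz hzm⟩

/-- Let `G` be a countable (loopless, undirected) graph with finite maximum
degree and minimum degree at least `δ > 0`. Then `G` has a spanning subgraph `G₁` with
minimum degree at least `δ` in which no edge joins two (distinct) vertices both of degree
greater than `δ`. -/
theorem spanning_subgraph_no_adjacent_high_degrees
    {V : Type*} [Countable V] (G : SimpleGraph V) (δ : ℕ) (hδpos : 0 < δ)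
    (hmaxdeg : ∃ Δ : ℕ, ∀ v : V, (G.neighborSet v).Finite ∧ (G.neighborSet v).ncard ≤ Δ)
    (hmindeg : ∀ v : V, δ ≤ (G.neighborSet v).ncard) :
    ∃ G₁ : SimpleGraph V, G₁ ≤ G ∧
      (∀ v : V, δ ≤ (G₁.neighborSet v).ncard) ∧
      (∀ x y : V, G₁.Adj x y →
        ¬(δ < (G₁.neighborSet x).ncard ∧ δ < (G₁.neighborSet y).ncard)) := by
  classical
  obtain ⟨Δ, hΔ⟩ := hmaxdeg
  set S : Set (SimpleGraph V) :=
    {H | H ≤ G ∧ ∀ v : V, δ ≤ (H.neighborSet v).ncard} with hSdef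
  have hGS : G ∈ S := ⟨le_rfl, hmindeg⟩
  -- finiteness of neighbor sets of subgraphs
  have hfin : ∀ (H : SimpleGraph V), H ≤ G → ∀ v, (H.neighborSet v).Finite :=
    fun H hH v => (hΔ v).1.subset (fun w hw => hH hw)
  -- chains have lower bounds in S
  have hchainlb : ∀ c ⊆ S, IsChain (· ≤ ·) c → ∀ y ∈ c, ∃ lb ∈ S, ∀ z ∈ c, lb ≤ z := by
    intro c hcS hchain y hyc
    refine ⟨sInf c, ⟨(sInf_le hyc).trans (hcS hyc).1, ?_⟩, fun z hz => sInf_le hz⟩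
    intro v
    -- the neighbor sets of v along the chain form a finite chain of sets
    set F : Set (Set V) := (fun H => H.neighborSet v) '' c with hFdef
    have hFfin : F.Finite := by
      apply ((hΔ v).1.finite_subsets).subset
      rintro _ ⟨H, hH, rfl⟩
      exact fun w hw => (hcS hH).1 hw
    have hFne : F.Nonempty := ⟨_, ⟨y, hyc, rfl⟩⟩
    have hFchain : IsChain (· ⊆ ·) F := by
      rintro _ ⟨H₁, h1, rfl⟩ _ ⟨H₂, h2, rfl⟩ hne
      rcases hchain.total h1 h2 with h | h
      · exact Or.inl (fun w hw => h hw)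
      · exact Or.inr (fun w hw => h hw)
    obtain ⟨a, haF, hamin⟩ : ∃ a ∈ F, ∀ b ∈ F, id b ⊆ id a → id a = id b := by
      obtain ⟨a, ha, h⟩ := Set.Finite.exists_minimalFor id F hFfin hFne
      exact ⟨a, ha, fun b hb hba => Set.Subset.antisymm (h hb hba) hba⟩
    have hleast : ∀ b ∈ F, a ⊆ b := by
      intro b hb
      rcases hFchain.total haF hb with h | h
      · exact h
      · exact le_of_eq (hamin b hb h)
    have hInter : (sInf c).neighborSet v = ⋂₀ F := by
      ext w
      simp only [mem_neighborSet, sInf_adj, Set.mem_sInter, hFdef, Set.mem_image]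
      constructor
      · rintro ⟨h1, -⟩ t ⟨H, hH, rfl⟩
        exact h1 H hH
      · intro h
        refine ⟨fun H hH => h _ ⟨H, hH, rfl⟩, ?_⟩
        have := h _ ⟨y, hyc, rfl⟩
        exact (this : y.Adj v w).ne
    have hIa : ⋂₀ F = a := by
      apply Set.Subset.antisymm
      · exact Set.sInter_subset_of_mem haF
      · exact Set.subset_sInter hleast
    rw [hInter, hIa]
    obtain ⟨H, hH, rfl⟩ := haF
    exact (hcS hH).2 v
  -- Zorn: a minimal element of S exists
  obtain ⟨m, -, ⟨hmle, hmdeg⟩, hmin⟩ := zorn_min_aux S G hGS hchainlb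
  -- m is the desired subgraph
  refine ⟨m, hmle, hmdeg, ?_⟩
  rintro x y hxy ⟨hx, hy⟩
  have hxyne : x ≠ y := hxy.ne
  set m' : SimpleGraph V := m.deleteEdges {s(x, y)} with hm'def
  have hle' : m' ≤ m := deleteEdges_le _
  have hnbr : ∀ v : V, v ≠ x → v ≠ y → m'.neighborSet v = m.neighborSet v := by
    intro v hvx hvy
    ext w
    simp only [mem_neighborSet, hm'def, deleteEdges_adj, Set.mem_singleton_iff,
      Sym2.eq, Sym2.rel_iff', Prod.mk.injEq, Prod.swap_prod_mk]
    constructor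
    · exact fun h => h.1
    · intro h
      refine ⟨h, ?_⟩
      rintro (⟨rfl, rfl⟩ | ⟨rfl, rfl⟩) <;> simp_all
  have hnbx : m'.neighborSet x = m.neighborSet x \ {y} := by
    ext w
    rw [hm'def, mem_neighborSet, deleteEdges_adj]
    constructor
    · rintro ⟨h1, h2⟩
      refine ⟨h1, fun hw => h2 ?_⟩
      rw [Set.mem_singleton_iff] at hw ⊢
      rw [hw]
    · rintro ⟨h1, h2⟩
      refine ⟨h1, fun hc => ?_⟩
      rw [Set.mem_singleton_iff, Sym2.eq_iff] at hc
      rcases hc with ⟨-, h⟩ | ⟨h, -⟩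
      · exact h2 (Set.mem_singleton_iff.2 h)
      · exact hxyne h
  have hnby : m'.neighborSet y = m.neighborSet y \ {x} := by
    ext w
    rw [hm'def, mem_neighborSet, deleteEdges_adj]
    constructor
    · rintro ⟨h1, h2⟩
      refine ⟨h1, fun hw => h2 ?_⟩
      rw [Set.mem_singleton_iff] at hw ⊢
      rw [hw, Sym2.eq_swap]
    · rintro ⟨h1, h2⟩
      refine ⟨h1, fun hc => ?_⟩
      rw [Set.mem_singleton_iff, Sym2.eq_iff] at hc
      rcases hc with ⟨h, -⟩ | ⟨-, h⟩
      · exact hxyne h.symm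
      · exact h2 (Set.mem_singleton_iff.2 h)
  have hdiff : ∀ (v w : V), v ≠ w → m.Adj v w → δ < (m.neighborSet v).ncard →
      δ ≤ ((m.neighborSet v) \ {w}).ncard := by
    intro v w _ hadj hlt
    have hfv : (m.neighborSet v).Finite := hfin m hmle v
    have hwmem : w ∈ m.neighborSet v := hadj
    have := Set.ncard_diff_singleton_add_one hwmem hfv
    omega
  have hm'S : m' ∈ S := by
    refine ⟨hle'.trans hmle, fun v => ?_⟩
    by_cases hvx : v = x
    · subst hvx
      rw [hnbx]
      exact hdiff v y hxyne hxy hx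
    by_cases hvy : v = y
    · subst hvy
      rw [hnby]
      exact hdiff v x (Ne.symm hxyne) hxy.symm hy
    · rw [hnbr v hvx hvy]; exact hmdeg v
  have : m ≤ m' := hmin m' hm'S hle'
  have : m'.Adj x y := this hxy
  rw [hm'def] at this
  simp [deleteEdges_adj] at this
end
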